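/- Let G be a graph with a perfect matching and let B be a maximal barrier of G. Then every connected component of G − B is factor-critical. -/

import Mathlib

open SimpleGraph Set

universe u
variable {V : Type u}

/-- Number of odd components of a graph. -/
noncomputable def oddComps (G : SimpleGraph V) : ℕ :=
  Nat.card {c : G.ConnectedComponent // Odd (Nat.card c.supp)}

/-- `S` is a barrier of `G`: the number of odd components of `G − S` equals `|S|`. -/
def IsBarrier (G : SimpleGraph V) (S : Set V) : Prop :=
  oddComps (G.induce Sᶜ) = S.ncard

/-- `G` has a perfect matching. -/
def HasPM (G : SimpleGraph V) : Prop :=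
  ∃ M : Subgraph G, M.IsPerfectMatching

/-- `G` is matching covered. -/
def MatchingCovered (G : SimpleGraph V) : Prop :=
  G.Connected ∧ G.edgeSet.Nonempty ∧
    ∀ e ∈ G.edgeSet, ∃ M : Subgraph G, M.IsPerfectMatching ∧ e ∈ M.edgeSet

/-- An edge `e` of a matching covered graph `G` is removable. -/
def Removable (G : SimpleGraph V) (e : Sym2 V) : Prop :=
  e ∈ G.edgeSet ∧ MatchingCovered (G.deleteEdges {e})

/-- `G` is 3-connected. -/
def ThreeConnected (G : SimpleGraph V) : Prop :=
  4 ≤ Nat.card V ∧ ∀ S : Set V, S.ncard ≤ 2 → (G.induce Sᶜ).Connected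

/-- A brick. -/
def IsBrick (G : SimpleGraph V) : Prop :=
  ThreeConnected G ∧ ∀ x y : V, x ≠ y → HasPM (G.induce ({x, y} : Set V)ᶜ)

/-- neighbours outside `S` of vertices of `S`. -/
def Nbrs (G : SimpleGraph V) (S : Set V) : Set V :=
  {v | v ∉ S ∧ ∃ u ∈ S, G.Adj u v}

/-- factor-critical graph. -/
def FactorCritical (G : SimpleGraph V) : Prop :=
  ∀ v : V, HasPM (G.induce ({v} : Set V)ᶜ)

/-- `(U, W)` is a bipartition of `G`. -/
def IsBipartition (G : SimpleGraph V) (U W : Set V) : Prop :=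
  Disjoint U W ∧ U ∪ W = Set.univ ∧
    ∀ a b : V, G.Adj a b → (a ∈ U ∧ b ∈ W) ∨ (a ∈ W ∧ b ∈ U)

section Aux
variable {W : Type u} {U : Type u} {H : SimpleGraph W}

lemma parity_aux (K : SimpleGraph U) [Finite U] : Odd (Nat.card U) ↔ Odd (oddComps K) := by
  rw [← K.odd_ncard_oddComponents, oddComps, ← Nat.card_coe_set_eq]
  simp only [Set.coe_setOf, Nat.card_coe_set_eq]

/-- flattening iso -/
noncomputable def induceInduceIso (G : SimpleGraph V) (A : Set V) (s : Set ↥A) :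
    (G.induce A).induce s ≃g G.induce (Subtype.val '' s) where
  toEquiv := (Equiv.Set.image Subtype.val s Subtype.val_injective)
  map_rel_iff' := by
    rintro ⟨⟨a, ha⟩, has⟩ ⟨⟨b, hb⟩, hbs⟩
    simp [Equiv.Set.image, Equiv.Set.imageOfInjOn]

lemma hasPM_of_iso {K : SimpleGraph U} (φ : H ≃g K) (h : HasPM H) :
    HasPM K := by
  obtain ⟨M, hM, hS⟩ := h
  refine ⟨M.map φ.toHom, (SimpleGraph.Subgraph.Iso.isMatching_map φ).mpr hM, fun v => ?_⟩
  exact ⟨φ.symm v, hS _, by simp⟩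

lemma suppVal_disjoint {A₁ : Set W} {c c' : (H.induce A₁).ConnectedComponent} (h : c ≠ c') :
    Disjoint (Subtype.val '' c.supp) (Subtype.val '' c'.supp) := by
  rw [Set.disjoint_left]
  rintro x ⟨xa, hxa, rfl⟩ ⟨ya, hya, hval⟩
  rw [ConnectedComponent.mem_supp_iff] at hxa hya
  cases Subtype.val_injective hval
  exact h (hxa ▸ hya ▸ rfl)



lemma suppVal_subset {A₁ : Set W} (c : (H.induce A₁).ConnectedComponent) :
    Subtype.val '' c.supp ⊆ A₁ := by
  rintro x ⟨⟨x, hx⟩, _, rfl⟩; exact hx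

lemma suppVal_nonempty {A₁ : Set W} (c : (H.induce A₁).ConnectedComponent) :
    (Subtype.val '' c.supp).Nonempty := by
  obtain ⟨v, hv⟩ := c.exists_rep
  exact ⟨v.1, v, hv, rfl⟩

lemma suppVal_ncard {A₁ : Set W} (c : (H.induce A₁).ConnectedComponent) :
    (Subtype.val '' c.supp).ncard = Nat.card c.supp := by
  rw [Set.ncard_image_of_injective _ Subtype.val_injective, Nat.card_coe_set_eq]

lemma suppVal_closed {A₁ : Set W} (c : (H.induce A₁).ConnectedComponent)
    {x : W} (hx : x ∈ Subtype.val '' c.supp) {y : W} (hy : y ∈ A₁) (hadj : H.Adj x y) :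
    y ∈ Subtype.val '' c.supp := by
  obtain ⟨xa, hxa, rfl⟩ := hx
  refine ⟨⟨y, hy⟩, ?_, rfl⟩
  rw [ConnectedComponent.mem_supp_iff] at hxa ⊢
  rw [← hxa]
  exact ConnectedComponent.connectedComponentMk_eq_of_adj (by exact hadj.symm : (H.induce A₁).Adj ⟨y, hy⟩ xa)

lemma suppVal_mem_iff {A₁ : Set W} (c : (H.induce A₁).ConnectedComponent) {x : W} :
    x ∈ Subtype.val '' c.supp ↔ ∃ hx : x ∈ A₁, (H.induce A₁).connectedComponentMk ⟨x, hx⟩ = c := by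
  constructor
  · rintro ⟨⟨x, hx⟩, hmem, rfl⟩; exact ⟨hx, hmem⟩
  · rintro ⟨hx, hmem⟩; exact ⟨⟨x, hx⟩, hmem, rfl⟩

lemma walk_transfer {A B : Set W} {x y : ↥A}
    (p : (H.induce A).Walk x y) (hx : (x : W) ∈ B) (hy : (y : W) ∈ B)
    (hsupp : ∀ z ∈ p.support, (z : W) ∈ B) :
    (H.induce B).Reachable ⟨x, hx⟩ ⟨y, hy⟩ := by
  induction p with
  | nil => exact Reachable.refl _
  | @cons a b c hadj q ih =>
    have hb : (b : W) ∈ B := hsupp b (by simp [Walk.support_cons])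
    have h1 : (H.induce B).Adj ⟨a, hx⟩ ⟨b, hb⟩ := hadj
    exact (h1.reachable).trans (ih hb hy (fun z hz => hsupp z (by simp [Walk.support_cons, hz])))

lemma suppVal_reach {A₁ A : Set W} (c : (H.induce A₁).ConnectedComponent)
    (hA : Subtype.val '' c.supp ⊆ A) {x y : W}
    (hx : x ∈ Subtype.val '' c.supp) (hy : y ∈ Subtype.val '' c.supp) :
    (H.induce A).Reachable ⟨x, hA hx⟩ ⟨y, hA hy⟩ := by
  classical
  obtain ⟨xa, hxa, rfl⟩ := hx
  obtain ⟨ya, hya, rfl⟩ := hy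
  rw [ConnectedComponent.mem_supp_iff] at hxa hya
  have hreach : (H.induce A₁).Reachable xa ya := ConnectedComponent.exact (hxa.trans hya.symm)
  obtain ⟨p⟩ := hreach
  have hsupp : ∀ z ∈ p.support, (z : W) ∈ Subtype.val '' c.supp := by
    intro z hz
    refine ⟨z, ?_, rfl⟩
    rw [ConnectedComponent.mem_supp_iff, ← hxa]
    exact (ConnectedComponent.sound ⟨(p.takeUntil z hz)⟩).symm
  exact walk_transfer p (hA ⟨xa, (ConnectedComponent.mem_supp_iff _ _).mpr hxa, rfl⟩)
    (hA ⟨ya, (ConnectedComponent.mem_supp_iff _ _).mpr hya, rfl⟩) (fun z hz => hA (hsupp z hz))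




lemma mem_of_walk {K : SimpleGraph U} {D : Set U} (hcl : ∀ x ∈ D, ∀ y, K.Adj x y → y ∈ D)
    {a b : U} (p : K.Walk a b) (ha : a ∈ D) : b ∈ D := by
  induction p with
  | nil => exact ha
  | cons hadj q ih => exact ih (hcl _ ha _ hadj)

lemma supp_desc {K : SimpleGraph U} {D : Set U} {x0 : U} (hx0 : x0 ∈ D)
    (hconn : ∀ y ∈ D, K.Reachable x0 y)
    (hcl : ∀ x ∈ D, ∀ y, K.Adj x y → y ∈ D) :
    (K.connectedComponentMk x0).supp = D := by
  ext z
  simp only [ConnectedComponent.mem_supp_iff, ConnectedComponent.eq]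
  constructor
  · intro hr
    obtain ⟨p⟩ := hr.symm
    exact mem_of_walk hcl p hx0
  · exact fun hz => (hconn z hz).symm

lemma card_le_oddComps {H : SimpleGraph W} [Finite W] {ι : Type u} [Finite ι]
    {A : Set W} (D : ι → Set W) (hsub : ∀ i, D i ⊆ A) (hne : ∀ i, (D i).Nonempty)
    (hconn : ∀ i (x y : W) (hx : x ∈ D i) (hy : y ∈ D i),
      (H.induce A).Reachable ⟨x, hsub i hx⟩ ⟨y, hsub i hy⟩)
    (hcl : ∀ i, ∀ x ∈ D i, ∀ y ∈ A, H.Adj x y → y ∈ D i)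
    (hodd : ∀ i, Odd (D i).ncard)
    (hdisj : Pairwise (Function.onFun Disjoint D)) :
    Nat.card ι ≤ oddComps (H.induce A) := by
  classical
  have hx0 : ∀ i, (hne i).choose ∈ D i := fun i => (hne i).choose_spec
  have hsupp : ∀ i, ((H.induce A).connectedComponentMk ⟨(hne i).choose, hsub i (hx0 i)⟩).supp
      = Subtype.val ⁻¹' (D i) := by
    intro i
    apply supp_desc
    · exact hx0 i
    · rintro ⟨y, hyA⟩ hy
      exact hconn i _ _ (hx0 i) hy
    · rintro ⟨x, hxA⟩ hx ⟨y, hyA⟩ hadj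
      exact hcl i x hx y hyA hadj
  have hcard : ∀ i, Nat.card (((H.induce A).connectedComponentMk
      ⟨(hne i).choose, hsub i (hx0 i)⟩).supp) = (D i).ncard := by
    intro i
    rw [hsupp i]
    have e : (Subtype.val ⁻¹' (D i) : Set ↥A) ≃ ↥(D i) :=
      ⟨fun z => ⟨z.1.1, z.2⟩, fun w => ⟨⟨w.1, hsub i w.2⟩, w.2⟩,
        fun z => by ext; rfl, fun w => by ext; rfl⟩
    rw [Nat.card_congr e, Nat.card_coe_set_eq]
  let f : ι → {c : (H.induce A).ConnectedComponent // Odd (Nat.card c.supp)} :=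
    fun i => ⟨(H.induce A).connectedComponentMk ⟨(hne i).choose, hsub i (hx0 i)⟩,
      by rw [hcard i]; exact hodd i⟩
  have hf : Function.Injective f := by
    intro i j hij
    by_contra hne'
    have h1 := hsupp i
    have h2 := hsupp j
    simp only [f, Subtype.mk.injEq] at hij
    rw [hij] at h1
    have hmem : (⟨(hne j).choose, hsub j (hx0 j)⟩ : ↥A) ∈ Subtype.val ⁻¹' (D i) := by
      rw [← h1]; exact ConnectedComponent.connectedComponentMk_mem
    exact (hdisj hne').le_bot ⟨hmem, hx0 j⟩ |>.elim
  exact Nat.card_le_card_of_injective f hf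




lemma oddComps_eq_of_iso {H : SimpleGraph W} {K : SimpleGraph U} (φ : H ≃g K) :
    oddComps H = oddComps K :=
  Nat.card_congr <| Equiv.subtypeEquiv φ.connectedComponentEquiv (fun c => by
    rw [Nat.card_congr (ConnectedComponent.isoEquivSupp φ c)])

/-- iso between deleteVerts coe and induce of complement -/
noncomputable def deleteVertsIso (H : SimpleGraph W) (X : Set W) :
    ((⊤ : H.Subgraph).deleteVerts X).coe ≃g H.induce Xᶜ where
  toEquiv := Equiv.setCongr (by simp [Set.compl_eq_univ_diff])
  map_rel_iff' := by
    rintro ⟨a, ha⟩ ⟨b, hb⟩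
    simp only [Equiv.setCongr_apply, comap_adj, Function.Embedding.coe_subtype,
      Subgraph.coe_adj, Subgraph.deleteVerts_adj, Subgraph.top_adj, Subgraph.verts_top,
      Set.mem_univ, true_and]
    exact ⟨fun h => ⟨ha.2, hb.2, h⟩, fun h => h.2.2⟩

lemma easy_direction {H : SimpleGraph W} [Fintype W] (h : HasPM H) (X : Set W) :
    oddComps (H.induce Xᶜ) ≤ X.ncard := by
  classical
  obtain ⟨M, hM⟩ := h
  rw [← oddComps_eq_of_iso (deleteVertsIso H X)]
  have key : ∀ c : {c : ConnectedComponent ((⊤ : H.Subgraph).deleteVerts X).coe //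
      Odd (Nat.card c.supp)}, ∃ w : ↥X, ∃ v : ((⊤ : H.Subgraph).deleteVerts X).verts,
      M.Adj ↑v ↑w ∧ v ∈ c.1.supp := by
    rintro ⟨c, hc⟩
    obtain ⟨w, hw, v, hv⟩ := SimpleGraph.ConnectedComponent.odd_matches_node_outside hM ⟨c, by rw [Set.mem_setOf_eq, ← Nat.card_coe_set_eq]; exact hc⟩
    exact ⟨⟨w, hw⟩, v, hv⟩
  choose g v hadj hmem using key
  have hg : Function.Injective g := by
    intro c1 c2 heq
    obtain ⟨w1, hw1, huniq⟩ := hM.1 (hM.2 ((g c1 : W)))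
    have e1 : (v c1 : W) = w1 := huniq _ (hadj c1).symm
    have h2 := hadj c2
    rw [← heq] at h2
    have e2 : (v c2 : W) = w1 := huniq _ h2.symm
    have hv12 : v c1 = v c2 := Subtype.ext (e1.trans e2.symm)
    have h1 := hmem c1
    rw [hv12] at h1
    have h2' := hmem c2
    ext1
    rw [ConnectedComponent.mem_supp_iff] at h1 h2'
    rw [← h1, ← h2']
  calc Nat.card _ ≤ Nat.card ↥X := Nat.card_le_card_of_injective g hg
  _ = X.ncard := Nat.card_coe_set_eq X

lemma card_subtype_split_mem {α : Type u} [Finite α] {p : α → Prop} {a : α} (hp : p a) :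
    Nat.card {x // p x} = Nat.card {x // p x ∧ x ≠ a} + 1 := by
  have h1 : Nat.card {x // p x} = Set.ncard {x | p x} := Nat.card_coe_set_eq _
  have h2 : Nat.card {x // p x ∧ x ≠ a} = Set.ncard {x | p x ∧ x ≠ a} :=
    Nat.card_coe_set_eq _
  rw [h1, h2]
  have hset : {x | p x} = insert a {x | p x ∧ x ≠ a} := by
    ext x
    simp only [Set.mem_setOf_eq, Set.mem_insert_iff]
    by_cases hxa : x = a
    · subst hxa; tauto
    · tauto
  rw [hset, Set.ncard_insert_of_notMem (by simp) (Set.toFinite _)]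

lemma card_subtype_split_notmem {α : Type u} {p : α → Prop} {a : α} (hp : ¬ p a) :
    Nat.card {x // p x} = Nat.card {x // p x ∧ x ≠ a} := by
  apply Nat.card_congr
  apply Equiv.subtypeEquivRight
  intro x
  constructor
  · intro hx; exact ⟨hx, fun h => hp (h ▸ hx)⟩
  · tauto


lemma oddComps_eq_card_odd_comps {U : Type u} (K : SimpleGraph U) :
    oddComps K = Nat.card {c : K.ConnectedComponent // Odd (Nat.card c.supp)} := rfl

lemma split_lower [Fintype W] (B : Set W)
    (c₀ : (H.induce Bᶜ).ConnectedComponent) (T : Set W)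
    (hT : T ⊆ Subtype.val '' c₀.supp) :
    Nat.card {c : (H.induce Bᶜ).ConnectedComponent // Odd (Nat.card c.supp) ∧ c ≠ c₀}
      + oddComps (H.induce (Subtype.val '' c₀.supp \ T))
      ≤ oddComps (H.induce (B ∪ T)ᶜ) := by
  classical
  set D₀ : Set W := Subtype.val '' c₀.supp with hD₀
  -- disjointness of supports of distinct components, in valued form
  have hdisj' : ∀ (c c' : (H.induce Bᶜ).ConnectedComponent), c ≠ c' →
      Disjoint (Subtype.val '' c.supp) (Subtype.val '' c'.supp) :=
    fun c c' h => suppVal_disjoint h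
  have hsub1 : ∀ (c : {c : (H.induce Bᶜ).ConnectedComponent //
      Odd (Nat.card c.supp) ∧ c ≠ c₀}), Subtype.val '' c.1.supp ⊆ (B ∪ T)ᶜ := by
    rintro ⟨c, hodd, hne⟩ x hx
    simp only [Set.mem_compl_iff, Set.mem_union, not_or]
    refine ⟨fun hxB => (suppVal_subset c hx) hxB, fun hxT => ?_⟩
    exact Set.disjoint_left.mp (hdisj' c c₀ hne) hx (hT hxT)
  have hsub2 : ∀ (e : {e : (H.induce (D₀ \ T)).ConnectedComponent //
      Odd (Nat.card e.supp)}), Subtype.val '' e.1.supp ⊆ (B ∪ T)ᶜ := by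
    rintro ⟨e, hodd⟩ x hx
    have h1 : x ∈ D₀ \ T := suppVal_subset e hx
    simp only [Set.mem_compl_iff, Set.mem_union, not_or]
    exact ⟨fun hxB => (suppVal_subset c₀ h1.1) hxB, h1.2⟩
  -- the indexed family
  let ι := {c : (H.induce Bᶜ).ConnectedComponent // Odd (Nat.card c.supp) ∧ c ≠ c₀} ⊕
    {e : (H.induce (D₀ \ T)).ConnectedComponent // Odd (Nat.card e.supp)}
  let D : ι → Set W := Sum.elim (fun c => Subtype.val '' c.1.supp) (fun e => Subtype.val '' e.1.supp)
  have hsub : ∀ i, D i ⊆ (B ∪ T)ᶜ := by rintro (c | e); exacts [hsub1 c, hsub2 e]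
  have hne : ∀ i, (D i).Nonempty := by rintro (c | e); exacts [suppVal_nonempty _, suppVal_nonempty _]
  have hconn : ∀ i (x y : W) (hx : x ∈ D i) (hy : y ∈ D i),
      (H.induce (B ∪ T)ᶜ).Reachable ⟨x, hsub i hx⟩ ⟨y, hsub i hy⟩ := by
    rintro (c | e) x y hx hy
    · exact suppVal_reach c.1 (hsub1 c) hx hy
    · exact suppVal_reach e.1 (hsub2 e) hx hy
  have hcl : ∀ i, ∀ x ∈ D i, ∀ y ∈ (B ∪ T)ᶜ, H.Adj x y → y ∈ D i := by
    rintro (c | e) x hx y hy hadj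
    · have hyBc : y ∈ Bᶜ := fun hyB => (Set.mem_compl_iff _ _).mp hy (Set.mem_union_left _ hyB)
      exact suppVal_closed c.1 hx hyBc hadj
    · have hx' : x ∈ D₀ \ T := suppVal_subset e.1 hx
      have hyBc : y ∈ Bᶜ := fun hyB => (Set.mem_compl_iff _ _).mp hy (Set.mem_union_left _ hyB)
      have hyD₀ : y ∈ D₀ := suppVal_closed c₀ hx'.1 hyBc hadj
      have hyT : y ∉ T := fun hyT => (Set.mem_compl_iff _ _).mp hy (Set.mem_union_right _ hyT)
      exact suppVal_closed e.1 hx ⟨hyD₀, hyT⟩ hadj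
  have hodd : ∀ i, Odd (D i).ncard := by
    rintro (c | e)
    · rw [show D (Sum.inl c) = Subtype.val '' c.1.supp from rfl, suppVal_ncard]; exact c.2.1
    · rw [show D (Sum.inr e) = Subtype.val '' e.1.supp from rfl, suppVal_ncard]; exact e.2
  have hdisj : Pairwise (Function.onFun Disjoint D) := by
    rintro (c | e) (c' | e') hne'
    · exact hdisj' c.1 c'.1 (fun h => hne' (congrArg Sum.inl (Subtype.ext h)))
    · refine Set.disjoint_left.mpr (fun x hx hx' => ?_)
      have h1 : x ∈ D₀ := (suppVal_subset e'.1 hx').1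
      exact Set.disjoint_left.mp (hdisj' c.1 c₀ c.2.2) hx h1
    · refine Set.disjoint_left.mpr (fun x hx hx' => ?_)
      have h1 : x ∈ D₀ := (suppVal_subset e.1 hx).1
      exact Set.disjoint_left.mp (hdisj' c'.1 c₀ c'.2.2) hx' h1
    · exact suppVal_disjoint (fun h => hne' (congrArg Sum.inr (Subtype.ext h)))
  have := card_le_oddComps (H := H) (A := (B ∪ T)ᶜ) D hsub hne hconn hcl hodd hdisj
  rw [Nat.card_sum] at this
  exact this

lemma image_val_compl {A : Set W} (S : Set ↥A) :
    Subtype.val '' (Sᶜ : Set ↥A) = A \ Subtype.val '' S := by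
  ext x
  constructor
  · rintro ⟨xa, hxa, rfl⟩
    exact ⟨xa.2, fun ⟨ya, hya, hval⟩ => hxa (Subtype.val_injective hval ▸ hya)⟩
  · rintro ⟨hxA, hxS⟩
    exact ⟨⟨x, hxA⟩, fun h => hxS ⟨⟨x, hxA⟩, h, rfl⟩, rfl⟩

set_option maxHeartbeats 1000000 in
lemma core [Fintype W] {H : SimpleGraph W}
    (hcond : ∀ S : Set W, oddComps (H.induce Sᶜ) ≤ S.ncard)
    (B : Set W) (hB : oddComps (H.induce Bᶜ) = B.ncard)
    (hmax : ∀ T : Set W, T ⊆ Bᶜ → T.Nonempty →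
      oddComps (H.induce (B ∪ T)ᶜ) = (B ∪ T).ncard → False)
    (ih : ∀ A : Set W, A ≠ Set.univ → ¬ HasPM (H.induce A) →
      ∃ S : Set ↥A, S.ncard < oddComps ((H.induce A).induce Sᶜ))
    (c : (H.induce Bᶜ).ConnectedComponent) (v : W) (hv : v ∈ Subtype.val '' c.supp) :
    HasPM (H.induce (Subtype.val '' c.supp \ {v})) := by
  classical
  by_contra hnpm
  set Dc := Subtype.val '' c.supp with hDc
  set A₀ := Dc \ {v} with hA₀
  have hA₀univ : A₀ ≠ univ := fun h => by
    have hmem : v ∈ A₀ := h ▸ Set.mem_univ v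
    exact hmem.2 rfl
  obtain ⟨S, hS⟩ := ih A₀ hA₀univ hnpm
  set S' := Subtype.val '' S with hS'
  set T := insert v S' with hT
  have hS'A₀ : S' ⊆ A₀ := by rintro x ⟨xa, _, rfl⟩; exact xa.2
  have hvS' : v ∉ S' := fun h => (hS'A₀ h).2 rfl
  have hTDc : T ⊆ Dc := Set.insert_subset hv (hS'A₀.trans Set.diff_subset)
  have hTBc : T ⊆ Bᶜ := hTDc.trans (suppVal_subset c)
  have hS'card : S'.ncard = S.ncard := Set.ncard_image_of_injective _ Subtype.val_injective
  have hTcard : T.ncard = S'.ncard + 1 := Set.ncard_insert_of_notMem hvS' (Set.toFinite _)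
  have hBT : Disjoint B T := Set.disjoint_right.mpr (fun x hxT => hTBc hxT)
  have hBTcard : (B ∪ T).ncard = B.ncard + T.ncard :=
    Set.ncard_union_eq hBT (Set.toFinite _) (Set.toFinite _)
  have hDT : Dc \ T = A₀ \ S' := by
    rw [hA₀, hT]
    ext x
    simp only [Set.mem_diff, Set.mem_insert_iff, Set.mem_singleton_iff]
    tauto
  have hsplit := split_lower B c T hTDc
  rw [← hDc] at hsplit
  set o₂ := oddComps (H.induce (Dc \ T)) with ho₂
  have ho₂gt : S'.ncard < o₂ := by
    have hflat : oddComps ((H.induce A₀).induce Sᶜ) = o₂ := by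
      rw [ho₂, hDT, ← image_val_compl S, oddComps_eq_of_iso (induceInduceIso H A₀ Sᶜ)]
    rw [hS'card, ← hflat]
    exact hS
  have hpar : (Dc \ T).ncard % 2 = o₂ % 2 := by
    have h1 := parity_aux (H.induce (Dc \ T))
    rw [Nat.card_coe_set_eq] at h1
    rw [Nat.odd_iff, Nat.odd_iff] at h1
    omega
  have hcardDT : (Dc \ T).ncard = Dc.ncard - T.ncard :=
    Set.ncard_diff hTDc (Set.toFinite _)
  have hTle : T.ncard ≤ Dc.ncard := Set.ncard_le_ncard hTDc (Set.toFinite _)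
  set Nodd := Nat.card
    {c' : (H.induce Bᶜ).ConnectedComponent // Odd (Nat.card c'.supp) ∧ c' ≠ c} with hNodd
  have hDccard : Dc.ncard = Nat.card c.supp := suppVal_ncard c
  have hkey : (B ∪ T).ncard ≤ oddComps (H.induce (B ∪ T)ᶜ) := by
    by_cases hcodd : Odd (Nat.card c.supp)
    · haveI : Finite ((H.induce Bᶜ).ConnectedComponent) := inferInstance
      have hcnt : oddComps (H.induce Bᶜ) = Nodd + 1 := card_subtype_split_mem hcodd
      have hDcodd : Dc.ncard % 2 = 1 := by rw [hDccard]; exact Nat.odd_iff.mp hcodd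
      have ho₂ge : S'.ncard + 2 ≤ o₂ := by omega
      rw [hB] at hcnt
      omega
    · have hcnt : oddComps (H.induce Bᶜ) = Nodd := card_subtype_split_notmem hcodd
      rw [hB] at hcnt
      omega
  exact hmax T hTBc (Set.insert_nonempty _ _) (le_antisymm (hcond (B ∪ T)) hkey)

theorem tutte_aux (n : ℕ) : ∀ (W : Type u) [Fintype W], Nat.card W = n →
    ∀ H : SimpleGraph W, (∀ S : Set W, oddComps (H.induce Sᶜ) ≤ S.ncard) → HasPM H := by
  induction n using Nat.strong_induction_on with
  | _ n IH =>
  intro W _ hn H hcond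
  classical
  -- induction hypothesis packaged for `core`
  have ihc : ∀ A : Set W, A ≠ Set.univ → ¬ HasPM (H.induce A) →
      ∃ S : Set ↥A, S.ncard < oddComps ((H.induce A).induce Sᶜ) := by
    intro A hA hnpm
    by_contra h
    push_neg at h
    have hcard : Nat.card ↥A < n := by
      rw [← hn]
      calc Nat.card ↥A = A.ncard := Nat.card_coe_set_eq A
      _ < (Set.univ : Set W).ncard :=
        Set.ncard_lt_ncard (Set.ssubset_univ_iff.mpr hA) (Set.toFinite _)
      _ = Nat.card W := Set.ncard_univ W
    exact hnpm (IH _ hcard ↥A rfl (H.induce A) h)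
  -- a maximal barrier
  obtain ⟨B, hB𝒮, hBmax⟩ := Set.Finite.exists_maximalFor Set.ncard
    {X : Set W | oddComps (H.induce Xᶜ) = X.ncard} (Set.toFinite _)
    ⟨∅, by simpa using Nat.le_zero.mp (by simpa using hcond ∅)⟩
  have hB : oddComps (H.induce Bᶜ) = B.ncard := hB𝒮
  have hmaxB : ∀ T : Set W, T ⊆ Bᶜ → T.Nonempty →
      oddComps (H.induce (B ∪ T)ᶜ) = (B ∪ T).ncard → False := by
    intro T hTB hTne hbar
    have hd : Disjoint B T := Set.disjoint_right.mpr fun x hx => hTB hx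
    have hc : (B ∪ T).ncard = B.ncard + T.ncard :=
      Set.ncard_union_eq hd (Set.toFinite _) (Set.toFinite _)
    have hpos : 0 < T.ncard := (Set.ncard_pos (Set.toFinite _)).mpr hTne
    have := hBmax hbar (by omega)
    omega
  have hFC := core hcond B hB hmaxB ihc
  -- all components are odd
  have hodd : ∀ c : (H.induce Bᶜ).ConnectedComponent, Odd (Nat.card c.supp) := by
    intro c
    obtain ⟨v, hv⟩ := suppVal_nonempty c
    obtain ⟨M, hM⟩ := hFC c v hv
    haveI : Fintype ↥(Subtype.val '' c.supp \ {v}) := Fintype.ofFinite _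
    have heven : Even ((Subtype.val '' c.supp \ {v}).ncard) := by
      have := hM.even_card
      rwa [Set.ncard_eq_toFinset_card', Set.toFinset_card]
    have hcard : (Subtype.val '' c.supp).ncard = (Subtype.val '' c.supp \ {v}).ncard + 1 :=
      (Set.ncard_diff_singleton_add_one hv (Set.toFinite _)).symm
    rw [← suppVal_ncard c, hcard]
    exact heven.add_one
  haveI : Fintype ((H.induce Bᶜ).ConnectedComponent) := Fintype.ofFinite _
  have hcards : Nat.card ((H.induce Bᶜ).ConnectedComponent) = B.ncard := by
    rw [← hB]
    exact (Nat.card_congr (Equiv.subtypeUnivEquiv hodd)).symm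
  -- Hall's condition
  let t : (H.induce Bᶜ).ConnectedComponent → Finset W := fun c =>
    Set.toFinset {b | b ∈ B ∧ ∃ x ∈ Subtype.val '' c.supp, H.Adj x b}
  have htB : ∀ c, ∀ b ∈ t c, b ∈ B := by
    intro c b hb
    rw [Set.mem_toFinset] at hb
    exact hb.1
  have hall : ∀ A : Finset ((H.induce Bᶜ).ConnectedComponent),
      A.card ≤ (A.biUnion t).card := by
    intro A
    set B₁ : Set W := ↑(A.biUnion t) with hB₁
    have hB₁B : B₁ ⊆ B := by
      intro x hx
      rw [hB₁, Finset.coe_biUnion] at hx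
      simp only [Set.mem_iUnion, Finset.mem_coe] at hx
      obtain ⟨c, _, hc⟩ := hx
      exact htB c x hc
    have hsub : ∀ (i : {c // c ∈ A}), Subtype.val '' i.1.supp ⊆ B₁ᶜ := by
      rintro ⟨c, hc⟩ x hx
      exact fun hxB₁ => (suppVal_subset c hx) (hB₁B hxB₁)
    have hle := card_le_oddComps (H := H) (A := B₁ᶜ)
      (ι := {c // c ∈ A}) (fun i => Subtype.val '' i.1.supp) hsub
      (fun i => suppVal_nonempty _)
      (fun i x y hx hy => suppVal_reach i.1 (hsub i) hx hy)
      ?hcl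
      (fun i => by rw [suppVal_ncard]; exact hodd i.1)
      ?hdisj
    case hcl =>
      rintro ⟨c, hc⟩ x hx y hy hadj
      by_cases hyB : y ∈ B
      · exfalso
        apply hy
        rw [hB₁, Finset.coe_biUnion]
        simp only [Set.mem_iUnion, Finset.mem_coe]
        exact ⟨c, hc, by rw [Set.mem_toFinset]; exact ⟨hyB, x, hx, hadj⟩⟩
      · exact suppVal_closed c hx hyB hadj
    case hdisj =>
      rintro ⟨c, hc⟩ ⟨c', hc'⟩ hne
      exact suppVal_disjoint (fun h => hne (by simpa using h))
    calc A.card = Nat.card {c // c ∈ A} := by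
            rw [Nat.card_eq_fintype_card, Fintype.card_coe]
    _ ≤ oddComps (H.induce B₁ᶜ) := hle
    _ ≤ B₁.ncard := hcond B₁
    _ = (A.biUnion t).card := Set.ncard_coe_finset _
  obtain ⟨f, hfinj, hft⟩ := (Finset.all_card_le_biUnion_card_iff_existsInjective' t).mp hall
  have hfB : ∀ c, f c ∈ B := fun c => htB c _ (hft c)
  have hfadj : ∀ c, ∃ x ∈ Subtype.val '' c.supp, H.Adj x (f c) := by
    intro c
    have := hft c
    rw [Set.mem_toFinset] at this
    exact this.2
  choose u hu hadj using hfadj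
  -- f is surjective onto B
  have hfsurj : ∀ b ∈ B, ∃ c, f c = b := by
    intro b hb
    have hbij : Function.Bijective (fun c => (⟨f c, hfB c⟩ : ↥B)) := by
      rw [Nat.bijective_iff_injective_and_card]
      constructor
      · intro c c' h
        exact hfinj (congrArg Subtype.val h)
      · rw [hcards, Nat.card_coe_set_eq]
    obtain ⟨c, hc⟩ := hbij.2 ⟨b, hb⟩
    exact ⟨c, congrArg Subtype.val hc⟩
  -- assemble the perfect matching
  have hFC' : ∀ c : (H.induce Bᶜ).ConnectedComponent,
      ∃ M : Subgraph (H.induce (Subtype.val '' c.supp \ {u c})), M.IsPerfectMatching :=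
    fun c => hFC c (u c) (hu c)
  choose Mc hMc using hFC'
  let N : (H.induce Bᶜ).ConnectedComponent → Subgraph H := fun c =>
    (Mc c).map (SimpleGraph.Embedding.induce _).toHom
  let E : (H.induce Bᶜ).ConnectedComponent → Subgraph H := fun c =>
    H.subgraphOfAdj (hadj c)
  have hNm : ∀ c, (N c).IsMatching := fun c =>
    (hMc c).1.map _ Subtype.val_injective
  have hNverts : ∀ c, (N c).verts = Subtype.val '' c.supp \ {u c} := by
    intro c
    show Subtype.val '' (Mc c).verts = _
    rw [(hMc c).2.verts_eq_univ, Set.image_univ, Subtype.range_coe]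
  have hEm : ∀ c, (E c).IsMatching := fun c => Subgraph.IsMatching.subgraphOfAdj _
  have hEverts : ∀ c, (E c).verts = {u c, f c} := fun c => rfl
  have huB : ∀ c, u c ∉ B := fun c => fun h => (suppVal_subset c (hu c)) h
  have hNsup : (⨆ c, N c).IsMatching := by
    apply Subgraph.IsMatching.iSup hNm
    intro c c' hne
    rw [(hNm c).support_eq_verts, (hNm c').support_eq_verts, hNverts, hNverts]
    exact Set.disjoint_of_subset Set.diff_subset Set.diff_subset (suppVal_disjoint hne)
  have hEsup : (⨆ c, E c).IsMatching := by
    apply Subgraph.IsMatching.iSup hEm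
    intro c c' hne
    rw [(hEm c).support_eq_verts, (hEm c').support_eq_verts, hEverts, hEverts]
    rw [Set.disjoint_left]
    intro x hx hx'
    simp only [Set.mem_insert_iff, Set.mem_singleton_iff] at hx hx'
    rcases hx with rfl | rfl <;> rcases hx' with h' | h'
    · refine Set.disjoint_left.mp (suppVal_disjoint hne) (hu c) ?_
      rw [h']
      exact hu c'
    · exact huB c (h' ▸ hfB c')
    · exact huB c' (h' ▸ hfB c)
    · exact hne (hfinj h')
  have hdisjNE : Disjoint (⨆ c, N c).support (⨆ c, E c).support := by
    rw [hNsup.support_eq_verts, hEsup.support_eq_verts, Subgraph.verts_iSup,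
      Subgraph.verts_iSup]
    rw [Set.disjoint_left]
    intro x hx hx'
    simp only [Set.mem_iUnion] at hx hx'
    obtain ⟨c, hc⟩ := hx
    obtain ⟨c', hc'⟩ := hx'
    rw [hNverts] at hc
    rw [hEverts] at hc'
    rcases hc' with rfl | h'
    · rcases eq_or_ne c c' with rfl | hne
      · exact hc.2 rfl
      · exact Set.disjoint_left.mp (suppVal_disjoint hne) hc.1 (hu c')
    · rw [Set.mem_singleton_iff] at h'
      exact (suppVal_subset c hc.1) (h' ▸ hfB c')
  refine ⟨(⨆ c, N c) ⊔ (⨆ c, E c), hNsup.sup hEsup hdisjNE, ?_⟩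
  intro w
  rw [Subgraph.verts_sup, Subgraph.verts_iSup, Subgraph.verts_iSup]
  by_cases hwB : w ∈ B
  · obtain ⟨c, hc⟩ := hfsurj w hwB
    refine Set.mem_union_right _ (Set.mem_iUnion.mpr ⟨c, ?_⟩)
    rw [hEverts]
    right
    exact hc ▸ rfl
  · set c := (H.induce Bᶜ).connectedComponentMk (⟨w, hwB⟩ : ↥(Bᶜ : Set W)) with hc
    have hwD : w ∈ Subtype.val '' c.supp :=
      ⟨⟨w, hwB⟩, (ConnectedComponent.mem_supp_iff _ _).mpr rfl, rfl⟩
    by_cases hwu : w = u c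
    · refine Set.mem_union_right _ (Set.mem_iUnion.mpr ⟨c, ?_⟩)
      rw [hEverts]
      left
      exact hwu
    · refine Set.mem_union_left _ (Set.mem_iUnion.mpr ⟨c, ?_⟩)
      rw [hNverts]
      exact ⟨hwD, hwu⟩

end Aux


/-- every component of `G − B` is factor-critical for a maximal
barrier `B`. -/
theorem stmt3 [Fintype V] (G : SimpleGraph V) (hpm : HasPM G) (B : Set V)
    (hBne : B.Nonempty) (hB : IsBarrier G B)
    (hmax : ∀ B' : Set V, B'.Nonempty → IsBarrier G B' → B ⊆ B' → B = B') :
    ∀ c : (G.induce Bᶜ).ConnectedComponent,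
      FactorCritical ((G.induce Bᶜ).induce c.supp) := by
  classical
  have hcond : ∀ S : Set V, oddComps (G.induce Sᶜ) ≤ S.ncard := fun S => easy_direction hpm S
  have hB' : oddComps (G.induce Bᶜ) = B.ncard := hB
  have hmax' : ∀ T : Set V, T ⊆ Bᶜ → T.Nonempty →
      oddComps (G.induce (B ∪ T)ᶜ) = (B ∪ T).ncard → False := by
    intro T hTB hTne hbar
    obtain ⟨x, hx⟩ := hTne
    have heq : B = B ∪ T :=
      hmax (B ∪ T) ⟨x, Set.mem_union_right B hx⟩ hbar Set.subset_union_left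
    have hxB : x ∈ B := by rw [heq]; exact Set.mem_union_right B hx
    exact hTB hx hxB
  have ihc : ∀ A : Set V, A ≠ Set.univ → ¬ HasPM (G.induce A) →
      ∃ S : Set ↥A, S.ncard < oddComps ((G.induce A).induce Sᶜ) := by
    intro A _ hnpm
    by_contra h
    push_neg at h
    haveI : Fintype ↥A := Fintype.ofFinite _
    exact hnpm (tutte_aux (Nat.card ↥A) ↥A rfl (G.induce A) h)
  have hFC := core hcond B hB' hmax' ihc
  intro c v
  have key := hFC c (↑↑v : V) ⟨v.1, v.2, rfl⟩
  have hseteq : Subtype.val '' (Subtype.val '' (({v} : Set ↥c.supp)ᶜ))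
      = Subtype.val '' c.supp \ {(↑↑v : V)} := by
    ext x
    constructor
    · rintro ⟨y, ⟨z, hz, rfl⟩, rfl⟩
      refine ⟨⟨z.1, z.2, rfl⟩, ?_⟩
      intro heq
      rw [Set.mem_singleton_iff] at heq
      apply hz
      rw [Set.mem_singleton_iff]
      exact Subtype.val_injective (Subtype.val_injective heq)
    · rintro ⟨⟨y, hy, rfl⟩, hne⟩
      refine ⟨y, ⟨⟨y, hy⟩, ?_, rfl⟩, rfl⟩
      intro heq
      rw [Set.mem_singleton_iff] at heq
      apply hne
      rw [Set.mem_singleton_iff, ← heq]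
  rw [← hseteq] at key
  exact hasPM_of_iso ((induceInduceIso (G.induce Bᶜ) c.supp ({v}ᶜ)).trans
    (induceInduceIso G Bᶜ _)).symm key
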